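/- In the binary-IV setup, assume P(z = 1) > 0, P(z = 0) > 0, monotonicity, and P(C) > 0 for the complier event C. Then (E[y | z = 1] − E[y | z = 0])/(E[x | z = 1] − E[x | z = 0]) = E[g(1, u) − g(0, u) | C], the local average treatment effect among compliers. -/

import Mathlib

open MeasureTheory ProbabilityTheory

/-- Conditional expectation of a real random variable given an event:
`E[Y | E] = E[Y·1_E]/P(E)`. -/
noncomputable def cexp {Ωs : Type*} [MeasurableSpace Ωs] (μ : Measure Ωs)
    (Y : Ωs → ℝ) (E : Set Ωs) : ℝ :=
  (∫ ω in E, Y ω ∂μ) / (μ E).toReal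

private lemma indep_factor {Ωs V U : Type*} [MeasurableSpace Ωs] [MeasurableSpace V]
    [MeasurableSpace U]
    (μ : Measure Ωs) [IsProbabilityMeasure μ]
    (z : Ωs → Bool) (hzmeas : Measurable z)
    (v : Ωs → V) (u : Ωs → U)
    (hindep : IndepFun z (fun ω => (u ω, v ω)) μ)
    (φ : U × V → ℝ) (hφ : Measurable φ) (hint : Integrable (fun ω => φ (u ω, v ω)) μ)
    (b : Bool) :
    ∫ ω in {ω | z ω = b}, φ (u ω, v ω) ∂μ
      = (μ {ω | z ω = b}).toReal * ∫ ω, φ (u ω, v ω) ∂μ := by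
  have hA : MeasurableSet {ω | z ω = b} := hzmeas (measurableSet_singleton b)
  set X : Ωs → ℝ := fun ω => if z ω = b then 1 else 0 with hX
  have hXind : IndepFun X (fun ω => φ (u ω, v ω)) μ :=
    hindep.comp (φ := fun c : Bool => if c = b then (1:ℝ) else 0) (by measurability) hφ
  have hXeq : X = Set.indicator {ω | z ω = b} (fun _ => (1:ℝ)) := by
    funext ω; simp [hX, Set.indicator_apply, Set.mem_setOf_eq]
  have hXint : Integrable X μ := by
    rw [hXeq]; exact (integrable_const 1).indicator hA
  have hmul := hXind.integral_fun_mul_eq_mul_integral hXint.aestronglyMeasurable hint.aestronglyMeasurable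
  have h1 : ∫ ω, X ω ∂μ = (μ {ω | z ω = b}).toReal := by
    rw [hXeq, integral_indicator_const _ hA]; simp; rfl
  have h2 : (fun ω => X ω * φ (u ω, v ω))
      = Set.indicator {ω | z ω = b} (fun ω => φ (u ω, v ω)) := by
    funext ω; simp [hX, Set.indicator_apply, Set.mem_setOf_eq]
  rw [← integral_indicator hA, ← h2]
  calc ∫ ω, X ω * φ (u ω, v ω) ∂μ = (∫ ω, X ω ∂μ) * ∫ ω, φ (u ω, v ω) ∂μ := hmul
    _ = (μ {ω | z ω = b}).toReal * ∫ ω, φ (u ω, v ω) ∂μ := by rw [h1]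

theorem binary_iv_late_identification
    {Ωs V U : Type*} [MeasurableSpace Ωs] [MeasurableSpace V] [MeasurableSpace U]
    (μ : Measure Ωs) [IsProbabilityMeasure μ]
    (z : Ωs → Bool) (hzmeas : Measurable z)
    (v : Ωs → V) (hvmeas : Measurable v)
    (u : Ωs → U) (humeas : Measurable u)
    (f : Bool → V → Bool) (hfmeas : ∀ b, Measurable (f b))
    (g : Bool → U → ℝ) (hgmeas : ∀ b, Measurable (g b))
    (hgint : ∀ b, Integrable (fun ω => g b (u ω)) μ)
    (hindep : IndepFun z (fun ω => (u ω, v ω)) μ)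
    (hmono : ∀ w : V, f false w = true → f true w = true)
    (hz1 : 0 < μ {ω | z ω = true}) (hz0 : 0 < μ {ω | z ω = false})
    (x : Ωs → ℝ) (hx : x = fun ω => if f (z ω) (v ω) then (1 : ℝ) else 0)
    (y : Ωs → ℝ) (hy : y = fun ω => g (f (z ω) (v ω)) (u ω))
    (C : Set Ωs) (hC : C = {ω | f false (v ω) = false ∧ f true (v ω) = true})
    (hCpos : 0 < μ C) :
    (cexp μ y {ω | z ω = true} - cexp μ y {ω | z ω = false}) /
      (cexp μ x {ω | z ω = true} - cexp μ x {ω | z ω = false}) =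
    cexp μ (fun ω => g true (u ω) - g false (u ω)) C := by
  have hzpos : ∀ b : Bool, 0 < μ {ω | z ω = b} := by
    intro b; cases b
    · exact hz0
    · exact hz1
  have hA : ∀ b : Bool, MeasurableSet {ω | z ω = b} :=
    fun b => hzmeas (measurableSet_singleton b)
  have hPb : ∀ b : Bool, ((μ {ω | z ω = b}).toReal) ≠ 0 := by
    intro b
    exact (ENNReal.toReal_pos (hzpos b).ne' (measure_ne_top μ _)).ne'
  have hS : ∀ b : Bool, MeasurableSet {ω | f b (v ω) = true} :=
    fun b => hvmeas ((hfmeas b) (measurableSet_singleton true))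
  have hCmeas : MeasurableSet C := by
    rw [hC]
    exact (hvmeas ((hfmeas false) (measurableSet_singleton false))).inter
      (hvmeas ((hfmeas true) (measurableSet_singleton true)))
  -- measurability / integrability of the two "potential" compositions
  have hφy : ∀ b : Bool, Measurable (fun p : U × V => g (f b p.2) p.1) := by
    intro b
    have : (fun p : U × V => g (f b p.2) p.1)
        = fun p => if f b p.2 = true then g true p.1 else g false p.1 := by
      funext p; cases hb : f b p.2 <;> simp [hb]
    rw [this]
    exact Measurable.ite (((hfmeas b).comp measurable_snd) (measurableSet_singleton true))
      ((hgmeas true).comp measurable_fst) ((hgmeas false).comp measurable_fst)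
  have hyint : ∀ b : Bool, Integrable (fun ω => g (f b (v ω)) (u ω)) μ := by
    intro b
    have heq : (fun ω => g (f b (v ω)) (u ω))
        = fun ω => Set.indicator {ω | f b (v ω) = true} (fun ω => g true (u ω)) ω
            + Set.indicator {ω | f b (v ω) = true}ᶜ (fun ω => g false (u ω)) ω := by
      funext ω
      by_cases h : f b (v ω) = true <;>
        simp [Set.indicator_apply, Set.mem_setOf_eq, h]
    rw [heq]
    exact (((hgint true).indicator (hS b))).add ((hgint false).indicator (hS b).compl)
  have hφx : ∀ b : Bool, Measurable (fun p : U × V => if f b p.2 then (1:ℝ) else 0) := by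
    intro b
    exact Measurable.ite (((hfmeas b).comp measurable_snd) (measurableSet_singleton true))
      measurable_const measurable_const
  have hxint : ∀ b : Bool, Integrable (fun ω => if f b (v ω) then (1:ℝ) else 0) μ := by
    intro b
    have heq : (fun ω => if f b (v ω) then (1:ℝ) else 0)
        = Set.indicator {ω | f b (v ω) = true} (fun _ => (1:ℝ)) := by
      funext ω
      by_cases h : f b (v ω) = true <;> simp [Set.indicator_apply, Set.mem_setOf_eq, h]
    rw [heq]
    exact (integrable_const 1).indicator (hS b)
  -- identify the conditional expectations
  have hyb : ∀ b : Bool, cexp μ y {ω | z ω = b} = ∫ ω, g (f b (v ω)) (u ω) ∂μ := by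
    intro b
    have h1 : ∫ ω in {ω | z ω = b}, y ω ∂μ
        = ∫ ω in {ω | z ω = b}, g (f b (v ω)) (u ω) ∂μ := by
      refine setIntegral_congr_fun (hA b) (fun ω hω => ?_)
      simp only [Set.mem_setOf_eq] at hω
      rw [hy]; simp [hω]
    have h2 := indep_factor μ z hzmeas v u hindep
      (fun p : U × V => g (f b p.2) p.1) (hφy b) (hyint b) b
    rw [cexp, h1, h2, mul_comm, mul_div_assoc, div_self (hPb b), mul_one]
  have hxb : ∀ b : Bool, cexp μ x {ω | z ω = b}
      = ∫ ω, (if f b (v ω) then (1:ℝ) else 0) ∂μ := by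
    intro b
    have h1 : ∫ ω in {ω | z ω = b}, x ω ∂μ
        = ∫ ω in {ω | z ω = b}, (if f b (v ω) then (1:ℝ) else 0) ∂μ := by
      refine setIntegral_congr_fun (hA b) (fun ω hω => ?_)
      simp only [Set.mem_setOf_eq] at hω
      rw [hx]; simp [hω]
    have h2 := indep_factor μ z hzmeas v u hindep
      (fun p : U × V => if f b p.2 then (1:ℝ) else 0) (hφx b) (hxint b) b
    rw [cexp, h1, h2, mul_comm, mul_div_assoc, div_self (hPb b), mul_one]
  -- numerator
  have hnum : cexp μ y {ω | z ω = true} - cexp μ y {ω | z ω = false}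
      = ∫ ω in C, (g true (u ω) - g false (u ω)) ∂μ := by
    rw [hyb true, hyb false, ← integral_sub (hyint true) (hyint false),
      ← integral_indicator hCmeas]
    congr 1
    funext ω
    by_cases hff : f false (v ω) = true
    · have hft := hmono (v ω) hff
      have : ω ∉ C := by rw [hC]; simp [hff]
      simp [hff, hft, Set.indicator_apply, this]
    · have hff' : f false (v ω) = false := by simpa using hff
      cases hft : f true (v ω)
      · have : ω ∉ C := by rw [hC]; simp [hft]
        simp [hff', hft, Set.indicator_apply, this]
      · have : ω ∈ C := by rw [hC]; exact ⟨hff', hft⟩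
        simp [hff', hft, Set.indicator_apply, this]
  -- denominator
  have hden : cexp μ x {ω | z ω = true} - cexp μ x {ω | z ω = false} = (μ C).toReal := by
    rw [hxb true, hxb false, ← integral_sub (hxint true) (hxint false)]
    have heq : (fun ω => (if f true (v ω) then (1:ℝ) else 0)
        - (if f false (v ω) then (1:ℝ) else 0)) = Set.indicator C (fun _ => (1:ℝ)) := by
      funext ω
      by_cases hff : f false (v ω) = true
      · have hft := hmono (v ω) hff
        have : ω ∉ C := by rw [hC]; simp [hff]
        simp [hff, hft, Set.indicator_apply, this]
      · have hff' : f false (v ω) = false := by simpa using hff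
        cases hft : f true (v ω)
        · have : ω ∉ C := by rw [hC]; simp [hft]
          simp [hff', hft, Set.indicator_apply, this]
        · have : ω ∈ C := by rw [hC]; exact ⟨hff', hft⟩
          simp [hff', hft, Set.indicator_apply, this]
    rw [heq, integral_indicator_const _ hCmeas]; simp; rfl
  rw [hnum, hden]
  rfl
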